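/- Let f : 2^S → ℝ be z-indexable and let 1 ≤ k ≤ n−1. Define the mixed Hider strategy q on S^(k) by q_A = (∏_{i∈A} z_i)/T_k(S). Then the expected payoff P_f(q,σ) = Σ_{A∈S^(k)} q_A P_f(A,σ) is the same for every search σ. -/

import Mathlib

/-- `f` is `z`-indexable. -/
def ZIndexable {n : ℕ} (f : Finset (Fin n) → ℝ) (z : Fin n → ℝ) : Prop :=
  (∀ r : Fin n, 0 < z r) ∧
  (∀ A : Finset (Fin n), 0 < f A) ∧
  (∀ A B : Finset (Fin n), B ⊂ A → f A < f B) ∧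
  (∀ (A : Finset (Fin n)) (i j : Fin n), i ≠ j → i ∉ A → j ∉ A →
    (f (insert i (insert j A)) - f (insert j A)) /
      (f (insert j (insert i A)) - f (insert i A)) = z i / z j)

/-- The set of locations searched by the time all targets in `H` are found. -/
def stopSet {n : ℕ} (σ : Equiv.Perm (Fin n)) (H : Finset (Fin n)) : Finset (Fin n) :=
  (Finset.univ.filter
    (fun t : Fin n => (t : ℕ) ≤ H.sup (fun h => ((σ.symm h : Fin n) : ℕ)))).image σ

/-- The payoff `P_f(H,σ) = f(S^σ_i)`, `i` minimal with `H ⊆ S^σ_i`. -/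
def payoff {n : ℕ} (f : Finset (Fin n) → ℝ) (σ : Equiv.Perm (Fin n))
    (H : Finset (Fin n)) : ℝ :=
  f (stopSet σ H)

/-- `T_k(A) = Σ_{B ⊆ A, |B| = k} ∏_{i∈B} z_i`. -/
def T {n : ℕ} (z : Fin n → ℝ) (k : ℕ) (A : Finset (Fin n)) : ℝ :=
  ∑ B ∈ Finset.powersetCard k A, ∏ i ∈ B, z i

/-- Position of location `y` in the search order `σ`. -/
private def spos {n : ℕ} (σ : Equiv.Perm (Fin n)) (y : Fin n) : ℕ :=
  ((σ.symm y : Fin n) : ℕ)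

private lemma mem_stopSet' {n : ℕ} (σ : Equiv.Perm (Fin n)) (H : Finset (Fin n)) (y : Fin n) :
    y ∈ stopSet σ H ↔ spos σ y ≤ H.sup (spos σ) := by
  unfold stopSet spos
  simp only [Finset.mem_image, Finset.mem_filter, Finset.mem_univ, true_and]
  constructor
  · rintro ⟨x, hx, rfl⟩; simpa using hx
  · intro h; exact ⟨σ.symm y, h, σ.apply_symm_apply y⟩

/-- The unnormalized expected payoff. -/
private def G {n : ℕ} (f : Finset (Fin n) → ℝ) (z : Fin n → ℝ) (k : ℕ)
    (σ : Equiv.Perm (Fin n)) : ℝ :=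
  ∑ A ∈ Finset.powersetCard k (Finset.univ : Finset (Fin n)),
    (∏ j ∈ A, z j) * f (stopSet σ A)

private lemma adj {m k : ℕ} (hk : 1 ≤ k) (f : Finset (Fin (m + 1)) → ℝ)
    (z : Fin (m + 1) → ℝ) (hf : ZIndexable f z)
    (σ : Equiv.Perm (Fin (m + 1))) (i : Fin m) :
    G f z k (σ * Equiv.swap i.castSucc i.succ) = G f z k σ := by
  classical
  obtain ⟨hz, hfpos, hmono, hratio⟩ := hf
  set σ' := σ * Equiv.swap i.castSucc i.succ with hσ'
  set a := σ i.castSucc with ha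
  set b := σ i.succ with hb
  set tn : ℕ := (i : ℕ) with htn
  have hab : a ≠ b := fun h => (Fin.castSucc_lt_succ : i.castSucc < i.succ).ne (σ.injective h)
  have hpa : spos σ a = tn := by simp [spos, ha, htn]
  have hpb : spos σ b = tn + 1 := by simp [spos, hb, htn]
  have hya : ∀ y, spos σ y = tn ↔ y = a := by
    intro y
    constructor
    · intro h
      have h2 : σ.symm y = i.castSucc := by
        apply Fin.ext; simpa [spos, htn] using h
      rw [ha, ← h2, σ.apply_symm_apply]
    · rintro rfl; exact hpa
  have hyb : ∀ y, spos σ y = tn + 1 ↔ y = b := by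
    intro y
    constructor
    · intro h
      have h2 : σ.symm y = i.succ := by
        apply Fin.ext; simpa [spos, htn] using h
      rw [hb, ← h2, σ.apply_symm_apply]
    · rintro rfl; exact hpb
  have hpos' : ∀ y, spos σ' y = if y = a then tn + 1 else if y = b then tn else spos σ y := by
    intro y
    have h1 : σ'.symm y = Equiv.swap i.castSucc i.succ (σ.symm y) := by
      simp [hσ', Equiv.Perm.mul_def, Equiv.symm_trans_apply]
    by_cases hy : y = a
    · subst hy
      rw [if_pos rfl]
      have : σ.symm a = i.castSucc := by rw [ha, σ.symm_apply_apply]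
      simp [spos, h1, this, Equiv.swap_apply_left, htn]
    · rw [if_neg hy]
      by_cases hy2 : y = b
      · subst hy2
        rw [if_pos rfl]
        have : σ.symm b = i.succ := by rw [hb, σ.symm_apply_apply]
        simp [spos, h1, this, Equiv.swap_apply_right, htn]
      · rw [if_neg hy2]
        have h3 : σ.symm y ≠ i.castSucc := fun h => hy (by rw [ha, ← h, σ.apply_symm_apply])
        have h4 : σ.symm y ≠ i.succ := fun h => hy2 (by rw [hb, ← h, σ.apply_symm_apply])
        simp [spos, h1, Equiv.swap_apply_of_ne_of_ne h3 h4]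
  -- generic stop-set equality criterion
  have stopEq : ∀ A : Finset (Fin (m + 1)), A.sup (spos σ') = A.sup (spos σ) →
      A.sup (spos σ) ≠ tn → stopSet σ' A = stopSet σ A := by
    intro A h1 h2
    ext y
    rw [mem_stopSet', mem_stopSet', h1, hpos' y]
    by_cases hy : y = a
    · subst hy; rw [if_pos rfl, hpa]; omega
    · rw [if_neg hy]
      by_cases hy2 : y = b
      · subst hy2; rw [if_pos rfl, hpb]; omega
      · rw [if_neg hy2]
  -- the difference function
  set d : Finset (Fin (m + 1)) → ℝ :=
    fun A => (∏ j ∈ A, z j) * f (stopSet σ' A) - (∏ j ∈ A, z j) * f (stopSet σ A) with hd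
  rw [← sub_eq_zero, G, G, ← Finset.sum_sub_distrib]
  have hdsum : ∀ A ∈ Finset.powersetCard k (Finset.univ : Finset (Fin (m+1))),
      (∏ j ∈ A, z j) * f (stopSet σ' A) - (∏ j ∈ A, z j) * f (stopSet σ A) = d A :=
    fun A _ => rfl
  rw [Finset.sum_congr rfl hdsum]
  -- the pairing lemma
  have pair : ∀ B : Finset (Fin (m + 1)), a ∉ B → b ∉ B →
      d (insert a B) + d (insert b B) = 0 := by
    intro B haB hbB
    have hxB : ∀ x ∈ B, spos σ x ≠ tn ∧ spos σ x ≠ tn + 1 := by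
      intro x hx
      constructor
      · intro h; exact haB (((hya x).mp h) ▸ hx)
      · intro h; exact hbB (((hyb x).mp h) ▸ hx)
    have hposB : ∀ x ∈ B, spos σ' x = spos σ x := by
      intro x hx
      rw [hpos', if_neg (fun h : x = a => haB (h ▸ hx)), if_neg (fun h : x = b => hbB (h ▸ hx))]
    have hsupB' : B.sup (spos σ') = B.sup (spos σ) := Finset.sup_congr rfl hposB
    have hp'a : spos σ' a = tn + 1 := by rw [hpos', if_pos rfl]
    have hp'b : spos σ' b = tn := by rw [hpos', if_neg hab.symm, if_pos rfl]
    by_cases hcase : ∀ x ∈ B, spos σ x < tn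
    · -- the interesting case
      have hBsup : B.sup (spos σ) ≤ tn := Finset.sup_le fun x hx => (hcase x hx).le
      have hma : (insert a B).sup (spos σ) = tn := by
        rw [Finset.sup_insert, hpa]; exact sup_eq_left.mpr hBsup
      have hma' : (insert a B).sup (spos σ') = tn + 1 := by
        rw [Finset.sup_insert, hp'a, hsupB']
        exact sup_eq_left.mpr (hBsup.trans (Nat.le_succ tn))
      have hmb : (insert b B).sup (spos σ) = tn + 1 := by
        rw [Finset.sup_insert, hpb]
        exact sup_eq_left.mpr (hBsup.trans (Nat.le_succ tn))
      have hmb' : (insert b B).sup (spos σ') = tn := by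
        rw [Finset.sup_insert, hp'b, hsupB']; exact sup_eq_left.mpr hBsup
      set P : Finset (Fin (m + 1)) :=
        Finset.univ.filter (fun y => spos σ y < tn) with hP
      have hPa : a ∉ P := by simp [hP, hpa]
      have hPb : b ∉ P := by simp [hP, hpb]
      have s1 : stopSet σ (insert a B) = insert a P := by
        ext y
        rw [mem_stopSet', hma, Finset.mem_insert, hP, Finset.mem_filter]
        constructor
        · intro h
          rcases eq_or_lt_of_le h with h | h
          · exact Or.inl ((hya y).mp h)
          · exact Or.inr ⟨Finset.mem_univ y, h⟩
        · rintro (rfl | ⟨-, h⟩)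
          · exact hpa.le
          · exact h.le
      have s2 : stopSet σ (insert b B) = insert b (insert a P) := by
        ext y
        rw [mem_stopSet', hmb, Finset.mem_insert, Finset.mem_insert, hP, Finset.mem_filter]
        constructor
        · intro h
          rcases eq_or_lt_of_le h with h | h
          · exact Or.inl ((hyb y).mp h)
          · rcases eq_or_lt_of_le (Nat.lt_succ_iff.mp h) with h | h
            · exact Or.inr (Or.inl ((hya y).mp h))
            · exact Or.inr (Or.inr ⟨Finset.mem_univ y, h⟩)
        · rintro (rfl | rfl | ⟨-, h⟩)
          · exact hpb.le
          · rw [hpa]; omega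
          · omega
      have s3 : stopSet σ' (insert a B) = insert b (insert a P) := by
        ext y
        rw [mem_stopSet', hma', hpos' y, Finset.mem_insert, Finset.mem_insert, hP,
          Finset.mem_filter]
        by_cases hy : y = a
        · subst hy; simp
        · rw [if_neg hy]
          by_cases hy2 : y = b
          · subst hy2; simp
          · rw [if_neg hy2]
            have h3 : spos σ y ≠ tn := fun h => hy ((hya y).mp h)
            have h4 : spos σ y ≠ tn + 1 := fun h => hy2 ((hyb y).mp h)
            simp only [hy2, hy, false_or, Finset.mem_univ, true_and]
            omega
      have s4 : stopSet σ' (insert b B) = insert b P := by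
        ext y
        rw [mem_stopSet', hmb', hpos' y, Finset.mem_insert, hP, Finset.mem_filter]
        by_cases hy : y = a
        · rw [if_pos hy]
          constructor
          · intro h; exact absurd h (by omega)
          · rintro (h | ⟨-, h⟩)
            · exact absurd (hy.symm.trans h) hab
            · rw [hy, hpa] at h; omega
        · rw [if_neg hy]
          by_cases hy2 : y = b
          · subst hy2; simp
          · rw [if_neg hy2]
            have h3 : spos σ y ≠ tn := fun h => hy ((hya y).mp h)
            simp only [hy2, false_or, Finset.mem_univ, true_and]
            omega
      -- algebra
      have hbaP : b ∉ insert a P := by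
        rw [Finset.mem_insert]; rintro (h | h); exacts [hab.symm h, hPb h]
      have hss : insert a P ⊂ insert b (insert a P) := Finset.ssubset_insert hbaP
      have hlt : f (insert b (insert a P)) < f (insert a P) := hmono _ _ hss
      have key := hratio P a b hab hPa hPb
      rw [Finset.insert_comm a b P] at key
      have hden : f (insert b (insert a P)) - f (insert a P) ≠ 0 := by linarith
      rw [div_eq_div_iff hden (hz b).ne'] at key
      rw [hd]
      simp only [s1, s2, s3, s4, Finset.prod_insert haB, Finset.prod_insert hbB]
      linear_combination (-(∏ j ∈ B, z j)) * key
    · -- far case : some element of B is beyond position tn+1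
      push_neg at hcase
      obtain ⟨x₀, hx₀B, hx₀⟩ := hcase
      have hx2 : tn + 2 ≤ spos σ x₀ := by
        have := hxB x₀ hx₀B; omega
      have hsupbig : tn + 2 ≤ B.sup (spos σ) :=
        le_trans hx2 (Finset.le_sup hx₀B)
      have gen : ∀ c : Fin (m + 1), spos σ c ≤ tn + 1 → spos σ' c ≤ tn + 1 →
          stopSet σ' (insert c B) = stopSet σ (insert c B) := by
        intro c hc hc'
        have e1 : (insert c B).sup (spos σ) = B.sup (spos σ) := by
          rw [Finset.sup_insert]; exact sup_eq_right.mpr (by omega)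
        have e2 : (insert c B).sup (spos σ') = B.sup (spos σ) := by
          rw [Finset.sup_insert, hsupB']; exact sup_eq_right.mpr (by omega)
        apply stopEq
        · rw [e1, e2]
        · rw [e1]; omega
      have da : d (insert a B) = 0 := by
        simp only [hd]; rw [gen a (by rw [hpa]; omega) (by rw [hp'a])]; ring
      have db : d (insert b B) = 0 := by
        simp only [hd]; rw [gen b (by rw [hpb]) (by rw [hp'b]; omega)]; ring
      rw [da, db]; ring
  -- fixed sets have zero difference
  have hfix : ∀ A : Finset (Fin (m + 1)), A ∈ Finset.powersetCard k (Finset.univ : Finset (Fin (m+1))) →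
      ¬(a ∈ A ∧ b ∉ A) → ¬(b ∈ A ∧ a ∉ A) → d A = 0 := by
    intro A hA h1 h2
    have hcard : A.card = k := (Finset.mem_powersetCard_univ).mp hA
    have hstop : stopSet σ' A = stopSet σ A := by
      by_cases haA : a ∈ A
      · have hbA : b ∈ A := by by_contra hbA; exact h1 ⟨haA, hbA⟩
        have hta : tn ≤ A.sup (spos σ) := hpa ▸ Finset.le_sup haA
        have htb : tn + 1 ≤ A.sup (spos σ) := hpb ▸ Finset.le_sup hbA
        have hta' : tn ≤ A.sup (spos σ') := by
          have : spos σ' b = tn := by rw [hpos', if_neg hab.symm, if_pos rfl]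
          exact this ▸ Finset.le_sup hbA
        have htb' : tn + 1 ≤ A.sup (spos σ') := by
          have : spos σ' a = tn + 1 := by rw [hpos', if_pos rfl]
          exact this ▸ Finset.le_sup haA
        apply stopEq
        · apply le_antisymm
          · apply Finset.sup_le
            intro x hx
            rw [hpos']
            split_ifs with h h
            · omega
            · omega
            · exact Finset.le_sup hx
          · apply Finset.sup_le
            intro x hx
            by_cases hxa : x = a
            · subst hxa; rw [hpa]; omega
            · by_cases hxb : x = b
              · subst hxb; rw [hpb]; omega
              · have : spos σ x = spos σ' x := by
                  rw [hpos', if_neg hxa, if_neg hxb]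
                exact this ▸ Finset.le_sup hx
        · omega
      · have hbA : b ∉ A := by by_contra hbA; exact h2 ⟨hbA, haA⟩
        have heq : ∀ x ∈ A, spos σ' x = spos σ x := by
          intro x hx
          rw [hpos', if_neg (fun h : x = a => haA (h ▸ hx)), if_neg (fun h : x = b => hbA (h ▸ hx))]
        have hAne : A.Nonempty := by
          rw [← Finset.card_pos, hcard]; omega
        obtain ⟨x₁, hx₁, hx₁sup⟩ := Finset.exists_mem_eq_sup A hAne (spos σ)
        apply stopEq
        · exact Finset.sup_congr rfl heq
        · rw [hx₁sup]
          intro h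
          exact haA (((hya x₁).mp h) ▸ hx₁)
    simp only [hd, hstop]; ring
  -- the involution
  refine Finset.sum_involution
    (fun A _ => if a ∈ A ∧ b ∉ A then insert b (A.erase a)
      else if b ∈ A ∧ a ∉ A then insert a (A.erase b) else A)
    ?_ ?_ ?_ ?_
  · -- sums of pairs vanish
    intro A hA
    by_cases h1 : a ∈ A ∧ b ∉ A
    · simp only [if_pos h1]
      have hA' : A = insert a (A.erase a) := (Finset.insert_erase h1.1).symm
      have := pair (A.erase a) (Finset.notMem_erase a A) (fun h => h1.2 (Finset.mem_of_mem_erase h))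
      calc d A + d (insert b (A.erase a))
          = d (insert a (A.erase a)) + d (insert b (A.erase a)) := by rw [← hA']
        _ = 0 := this
    · simp only [if_neg h1]
      by_cases h2 : b ∈ A ∧ a ∉ A
      · simp only [if_pos h2]
        have hA' : A = insert b (A.erase b) := (Finset.insert_erase h2.1).symm
        have := pair (A.erase b) (fun h => h2.2 (Finset.mem_of_mem_erase h))
          (Finset.notMem_erase b A)
        calc d A + d (insert a (A.erase b))
            = d (insert a (A.erase b)) + d (insert b (A.erase b)) := by rw [← hA', add_comm]
          _ = 0 := this
      · simp only [if_neg h2]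
        have h0 := hfix A hA h1 h2
        simp only [hd] at h0
        linarith
  · -- moved sets are distinct
    intro A hA hdA
    by_cases h1 : a ∈ A ∧ b ∉ A
    · simp only [if_pos h1]
      intro h
      exact h1.2 (h ▸ Finset.mem_insert_self b (A.erase a))
    · simp only [if_neg h1]
      by_cases h2 : b ∈ A ∧ a ∉ A
      · simp only [if_pos h2]
        intro h
        exact h2.2 (h ▸ Finset.mem_insert_self a (A.erase b))
      · exact absurd (hfix A hA h1 h2) hdA
  · -- membership is preserved
    intro A hA
    have hcard : A.card = k := (Finset.mem_powersetCard_univ).mp hA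
    rw [Finset.mem_powersetCard_univ]
    by_cases h1 : a ∈ A ∧ b ∉ A
    · simp only [if_pos h1]
      rw [Finset.card_insert_of_notMem (fun h => h1.2 (Finset.mem_of_mem_erase h)),
        Finset.card_erase_of_mem h1.1, hcard]
      have : 1 ≤ A.card := Finset.card_pos.mpr ⟨a, h1.1⟩
      omega
    · simp only [if_neg h1]
      by_cases h2 : b ∈ A ∧ a ∉ A
      · simp only [if_pos h2]
        rw [Finset.card_insert_of_notMem (fun h => h2.2 (Finset.mem_of_mem_erase h)),
          Finset.card_erase_of_mem h2.1, hcard]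
        have : 1 ≤ A.card := Finset.card_pos.mpr ⟨b, h2.1⟩
        omega
      · simp only [if_neg h2]; exact hcard
  · -- involutive
    intro A hA
    by_cases h1 : a ∈ A ∧ b ∉ A
    · simp only [if_pos h1]
      have c1 : ¬(a ∈ insert b (A.erase a) ∧ b ∉ insert b (A.erase a)) := by
        intro h; exact h.2 (Finset.mem_insert_self b _)
      have c2 : b ∈ insert b (A.erase a) ∧ a ∉ insert b (A.erase a) := by
        refine ⟨Finset.mem_insert_self b _, ?_⟩
        rw [Finset.mem_insert]
        rintro (h | h)
        · exact hab h
        · exact Finset.notMem_erase a A h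
      rw [if_neg c1, if_pos c2,
        Finset.erase_insert (fun h => h1.2 (Finset.mem_of_mem_erase h)),
        Finset.insert_erase h1.1]
    · simp only [if_neg h1]
      by_cases h2 : b ∈ A ∧ a ∉ A
      · simp only [if_pos h2]
        have c1 : a ∈ insert a (A.erase b) ∧ b ∉ insert a (A.erase b) := by
          refine ⟨Finset.mem_insert_self a _, ?_⟩
          rw [Finset.mem_insert]
          rintro (h | h)
          · exact hab h.symm
          · exact Finset.notMem_erase b A h
        rw [if_pos c1,
          Finset.erase_insert (fun h => h2.2 (Finset.mem_of_mem_erase h)),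
          Finset.insert_erase h2.1]
      · simp only [if_neg h1, if_neg h2]

/-- against the Hider strategy `q` with `q_A = (∏_{i∈A} z_i)/T_k(S)`,
every search has the same expected payoff. -/
theorem hider_strategy_equalizing
    {n k : ℕ} (hk1 : 1 ≤ k) (hk2 : k ≤ n - 1)
    (f : Finset (Fin n) → ℝ) (z : Fin n → ℝ) (hf : ZIndexable f z) :
    ∀ σ τ : Equiv.Perm (Fin n),
      ∑ A ∈ Finset.powersetCard k (Finset.univ : Finset (Fin n)),
        ((∏ i ∈ A, z i) / T z k Finset.univ) * payoff f σ A =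
      ∑ A ∈ Finset.powersetCard k (Finset.univ : Finset (Fin n)),
        ((∏ i ∈ A, z i) / T z k Finset.univ) * payoff f τ A := by
  classical
  intro σ τ
  obtain ⟨m, rfl⟩ : ∃ m, n = m + 1 := ⟨n - 1, by omega⟩
  have hG : ∀ σ τ : Equiv.Perm (Fin (m + 1)), G f z k σ = G f z k τ := by
    have key : ∀ π : Equiv.Perm (Fin (m + 1)),
        π ∈ Submonoid.closure (Set.range fun i : Fin m => Equiv.swap i.castSucc i.succ) →
        ∀ ρ : Equiv.Perm (Fin (m + 1)), G f z k (ρ * π) = G f z k ρ := by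
      intro π hπ
      induction hπ using Submonoid.closure_induction with
      | mem x hx =>
        obtain ⟨i, rfl⟩ := hx
        intro ρ
        exact adj hk1 f z hf ρ i
      | one => intro ρ; rw [mul_one]
      | mul x y hx hy ihx ihy =>
        intro ρ
        rw [← mul_assoc, ihy, ihx]
    intro σ τ
    have h := key (σ⁻¹ * τ)
      (by rw [Equiv.Perm.mclosure_swap_castSucc_succ]; exact Submonoid.mem_top _) σ
    rw [← mul_assoc, mul_inv_cancel, one_mul] at h
    exact h.symm
  simp only [payoff, div_mul_eq_mul_div]
  rw [← Finset.sum_div, ← Finset.sum_div]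
  rw [show (∑ A ∈ Finset.powersetCard k (Finset.univ : Finset (Fin (m+1))),
      (∏ i ∈ A, z i) * f (stopSet σ A)) = G f z k σ from rfl,
    show (∑ A ∈ Finset.powersetCard k (Finset.univ : Finset (Fin (m+1))),
      (∏ i ∈ A, z i) * f (stopSet τ A)) = G f z k τ from rfl, hG σ τ]
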